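/- Let V ∈ ℂ^{n×k} have nonzero columns V_{*,1},…,V_{*,k}, let w ∈ ℂ^k with Vw ≠ 0, and let N = Σ_{i=1}^k |w_i|²‖V_{*,i}‖² (> 0). Consider the following rejection-sampling round: sample i ∈ [k] with probability |w_i|²‖V_{*,i}‖²/N; sample s ∈ [n] with probability |V_{si}|²/‖V_{*,i}‖²; accept and output s with probability r_s = |(Vw)_s|²/(k·Σ_{j=1}^k |V_{sj} w_j|²) (interpreted as 0 when the denominator is 0). Then: (i) r_s ≤ 1 for every s with Σ_j |V_{sj}w_j|² ≠ 0; (ii) for each s ∈ [n], the probability of accepting with output s equals |(Vw)_s|²/(k·N); (iii) the total acceptance probability equals ‖Vw‖²/(k·N) = 1/(k·C(V,w)), where C(V,w) = Σ_{i=1}^k ‖w_i V_{*,i}‖²/‖Vw‖²; (iv) conditioned on acceptance, the output s is distributed according to the ℓ²-sampling distribution of Vw. -/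

import Mathlib

open Finset

/-- correctness of one rejection-sampling round for `ℓ²`-sampling from `Vw`.
With `P(i) = |w_i|²‖V_{*,i}‖²/N`, `P(s|i) = |V_{si}|²/‖V_{*,i}‖²` and acceptance
probability `r s = |(Vw)_s|² / (k ∑_j |V_{sj} w_j|²)` (interpreted as `0` when the
denominator vanishes, as division by zero is `0` in Lean): (i) `r s ≤ 1` whenever the
denominator is nonzero; (ii) the probability of accepting with output `s` is
`|(Vw)_s|²/(kN)`; (iii) the total acceptance probability is `‖Vw‖²/(kN) = 1/(k C(V,w))`;
(iv) conditioned on acceptance, `s` follows the ℓ²-sampling distribution of `Vw`. -/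
theorem stmt3 (n k : ℕ) (V : Matrix (Fin n) (Fin k) ℂ) (w : Fin k → ℂ)
    (hcols : ∀ i : Fin k, (fun s => V s i) ≠ 0)
    (hVw : V.mulVec w ≠ 0)
    (N : ℝ) (hN : N = ∑ i, ‖w i‖ ^ 2 * ∑ s, ‖V s i‖ ^ 2)
    (r : Fin n → ℝ)
    (hr : ∀ s, r s = ‖V.mulVec w s‖ ^ 2 / ((k : ℝ) * ∑ j, ‖V s j * w j‖ ^ 2))
    (acc : Fin n → ℝ)
    (hacc : ∀ s, acc s = ∑ i, (‖w i‖ ^ 2 * (∑ u, ‖V u i‖ ^ 2) / N) *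
      (‖V s i‖ ^ 2 / ∑ u, ‖V u i‖ ^ 2) * r s)
    (C : ℝ) (hC : C = (∑ i, ‖w i‖ ^ 2 * ∑ s, ‖V s i‖ ^ 2) / ∑ s, ‖V.mulVec w s‖ ^ 2) :
    (∀ s, (∑ j, ‖V s j * w j‖ ^ 2) ≠ 0 → r s ≤ 1) ∧
    (∀ s, acc s = ‖V.mulVec w s‖ ^ 2 / ((k : ℝ) * N)) ∧
    ((∑ s, acc s) = (∑ s, ‖V.mulVec w s‖ ^ 2) / ((k : ℝ) * N) ∧
      (∑ s, acc s) = 1 / ((k : ℝ) * C)) ∧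
    (∀ s, acc s / ∑ s', acc s' = ‖V.mulVec w s‖ ^ 2 / ∑ s', ‖V.mulVec w s'‖ ^ 2) := by
  -- k ≠ 0
  have hk : (k : ℝ) ≠ 0 := by
    intro h
    have hk0 : k = 0 := by exact_mod_cast h
    apply hVw
    funext s
    subst hk0
    simp [Matrix.mulVec, dotProduct]
  have hkpos : (0 : ℝ) < k := lt_of_le_of_ne (Nat.cast_nonneg k) (Ne.symm hk)
  have hSi : ∀ i, (0 : ℝ) < ∑ u, ‖V u i‖ ^ 2 := by
    intro i
    have : ∃ u, V u i ≠ 0 := by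
      by_contra h
      push_neg at h
      exact hcols i (funext h)
    obtain ⟨u, hu⟩ := this
    exact Finset.sum_pos' (fun x _ => by positivity)
      ⟨u, Finset.mem_univ u, pow_pos (norm_pos_iff.mpr hu) 2⟩
  have hNpos : (0 : ℝ) < N := by
    have : ∃ i, w i ≠ 0 := by
      by_contra h
      push_neg at h
      apply hVw
      funext s
      simp [Matrix.mulVec, dotProduct, h]
    obtain ⟨i, hi⟩ := this
    rw [hN]
    exact Finset.sum_pos' (fun x _ => by positivity)
      ⟨i, Finset.mem_univ i, mul_pos (pow_pos (norm_pos_iff.mpr hi) 2) (hSi i)⟩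
  have hNne : N ≠ 0 := ne_of_gt hNpos
  have hSpos : (0 : ℝ) < ∑ s, ‖V.mulVec w s‖ ^ 2 := by
    have : ∃ s, V.mulVec w s ≠ 0 := by
      by_contra h
      push_neg at h
      exact hVw (funext h)
    obtain ⟨s, hs⟩ := this
    exact Finset.sum_pos' (fun x _ => by positivity)
      ⟨s, Finset.mem_univ s, pow_pos (norm_pos_iff.mpr hs) 2⟩
  -- (i)
  have part1 : ∀ s, (∑ j, ‖V s j * w j‖ ^ 2) ≠ 0 → r s ≤ 1 := by
    intro s hs
    have hD : (0 : ℝ) < ∑ j, ‖V s j * w j‖ ^ 2 :=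
      lt_of_le_of_ne (Finset.sum_nonneg fun _ _ => by positivity) (Ne.symm hs)
    rw [hr s, div_le_one (by positivity)]
    have h1 : ‖V.mulVec w s‖ ≤ ∑ j, ‖V s j * w j‖ := by
      simpa [Matrix.mulVec, dotProduct] using
        norm_sum_le Finset.univ (fun j => V s j * w j)
    have h2 : ‖V.mulVec w s‖ ^ 2 ≤ (∑ j, ‖V s j * w j‖) ^ 2 :=
      pow_le_pow_left₀ (norm_nonneg _) h1 2
    refine h2.trans ?_
    have h3 : (∑ j, ‖V s j * w j‖ * 1) ^ 2 ≤
        (∑ j, ‖V s j * w j‖ ^ 2) * ∑ _j : Fin k, (1 : ℝ) ^ 2 :=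
      Finset.sum_mul_sq_le_sq_mul_sq _ _ _
    simp only [mul_one, one_pow, Finset.sum_const, Finset.card_univ, Fintype.card_fin,
      nsmul_eq_mul] at h3
    linarith
  -- (ii)
  have part2 : ∀ s, acc s = ‖V.mulVec w s‖ ^ 2 / ((k : ℝ) * N) := by
    intro s
    have hsum : acc s = (∑ i, ‖V s i * w i‖ ^ 2) / N * r s := by
      rw [hacc s, Finset.sum_div, Finset.sum_mul]
      apply Finset.sum_congr rfl
      intro i _
      have hi := (hSi i).ne'
      have key : ∀ a b S rr : ℝ, S ≠ 0 → a * S / N * (b / S) * rr = a * b / N * rr := by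
        intro a b S rr hS
        field_simp
      rw [norm_mul, mul_pow, key _ _ _ _ hi, mul_comm (‖V s i‖ ^ 2)]
    by_cases hz : (∑ j, ‖V s j * w j‖ ^ 2) = 0
    · have hall : ∀ j ∈ (Finset.univ : Finset (Fin k)), ‖V s j * w j‖ ^ 2 = 0 :=
        (Finset.sum_eq_zero_iff_of_nonneg (fun j _ => by positivity)).mp hz
      have hVws : V.mulVec w s = 0 := by
        have hz2 : ∀ j, V s j * w j = 0 := by
          intro j
          have h1 := hall j (Finset.mem_univ j)
          have h2 := pow_eq_zero_iff (n := 2) (by norm_num) |>.mp h1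
          simpa using h2
        simp [Matrix.mulVec, dotProduct, hz2]
      rw [hsum, hz, hVws]
      simp
    · have hD : (0 : ℝ) < ∑ j, ‖V s j * w j‖ ^ 2 :=
        lt_of_le_of_ne (Finset.sum_nonneg fun _ _ => by positivity) (Ne.symm hz)
      rw [hsum, hr s, div_mul_div_comm]
      rw [div_eq_div_iff (by positivity) (by positivity)]
      ring
  -- (iii)
  have part3a : (∑ s, acc s) = (∑ s, ‖V.mulVec w s‖ ^ 2) / ((k : ℝ) * N) := by
    rw [Finset.sum_div]
    exact Finset.sum_congr rfl fun s _ => part2 s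
  have part3b : (∑ s, acc s) = 1 / ((k : ℝ) * C) := by
    rw [part3a, hC, ← hN, ← mul_div_assoc, one_div_div]
  refine ⟨part1, part2, ⟨part3a, part3b⟩, ?_⟩
  intro s
  rw [part3a, part2 s]
  rw [div_div_div_comm, div_self (by positivity : (0:ℝ) < (k : ℝ) * N).ne', div_one]
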